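/- For the same system, the second Lie derivative of the output along f is L_f² h(x) = (1/2)·T_sup·(T_sup − T_L)·x_v² + T_sup·v·√(p_sup − p_L − α·p_lp). -/

import Mathlib

lemma aux_hasFDerivAt (T_sup α p_lp : ℝ) (x : Fin 4 → ℝ)
    (hx : x 1 - x 0 - α * p_lp > 0) :
    HasFDerivAt (fun x : Fin 4 → ℝ => T_sup * x 3 * Real.sqrt (x 1 - x 0 - α * p_lp))
      ((T_sup * Real.sqrt (x 1 - x 0 - α * p_lp)) • (ContinuousLinearMap.proj 3 : (Fin 4 → ℝ) →L[ℝ] ℝ)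
        + (T_sup * x 3 * (1 / (2 * Real.sqrt (x 1 - x 0 - α * p_lp)))) •
          ((ContinuousLinearMap.proj 1 : (Fin 4 → ℝ) →L[ℝ] ℝ) - ContinuousLinearMap.proj 0)) x := by
  have hg : HasFDerivAt (fun x : Fin 4 → ℝ => x 1 - x 0 - α * p_lp)
      ((ContinuousLinearMap.proj 1 : (Fin 4 → ℝ) →L[ℝ] ℝ) - ContinuousLinearMap.proj 0) x := by
    simpa using
      (((ContinuousLinearMap.proj 1 : (Fin 4 → ℝ) →L[ℝ] ℝ).hasFDerivAt (x := x)).sub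
        ((ContinuousLinearMap.proj 0 : (Fin 4 → ℝ) →L[ℝ] ℝ).hasFDerivAt (x := x))).sub_const
      (α * p_lp)
  have hs : HasFDerivAt (fun x : Fin 4 → ℝ => Real.sqrt (x 1 - x 0 - α * p_lp))
      ((1 / (2 * Real.sqrt (x 1 - x 0 - α * p_lp))) •
        ((ContinuousLinearMap.proj 1 : (Fin 4 → ℝ) →L[ℝ] ℝ) - ContinuousLinearMap.proj 0)) x :=
    (Real.hasDerivAt_sqrt (ne_of_gt hx)).comp_hasFDerivAt x hg
  have h3 : HasFDerivAt (fun x : Fin 4 → ℝ => T_sup * x 3)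
      (T_sup • (ContinuousLinearMap.proj 3 : (Fin 4 → ℝ) →L[ℝ] ℝ)) x :=
    ((ContinuousLinearMap.proj 3 : (Fin 4 → ℝ) →L[ℝ] ℝ).hasFDerivAt (x := x)).const_mul T_sup
  have := h3.mul hs
  refine this.congr_fderiv ?_
  ext u
  simp [ContinuousLinearMap.smul_apply]
  ring

theorem stmt3 (T_L T_sup D ω K α p_lp : ℝ)
    (Lfh : (Fin 4 → ℝ) → ℝ)
    (hLfh : Lfh = fun x => T_sup * x 3 * Real.sqrt (x 1 - x 0 - α * p_lp))
    (f : (Fin 4 → ℝ) → (Fin 4 → ℝ))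
    (hf : f = fun x => ![T_L * x 3 * Real.sqrt (x 1 - x 0 - α * p_lp),
                         T_sup * x 3 * Real.sqrt (x 1 - x 0 - α * p_lp),
                         -2 * D * ω * x 2 - ω^2 * x 3,
                         x 2]) :
    ∀ x : Fin 4 → ℝ, x 1 - x 0 - α * p_lp > 0 →
      fderiv ℝ Lfh x (f x) =
        (1/2) * T_sup * (T_sup - T_L) * (x 3)^2
          + T_sup * x 2 * Real.sqrt (x 1 - x 0 - α * p_lp) := by
  intro x hx
  subst hLfh hf
  rw [(aux_hasFDerivAt T_sup α p_lp x hx).fderiv]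
  set s := Real.sqrt (x 1 - x 0 - α * p_lp) with hs
  have hspos : 0 < s := Real.sqrt_pos.mpr hx
  have hss : s * s = x 1 - x 0 - α * p_lp := Real.mul_self_sqrt hx.le
  simp [ContinuousLinearMap.smul_apply]
  field_simp
  ring
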